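/- arXiv:2602.00326 — 3 statements merged into one kernel-verified Lean document; each statement's English description precedes it below -/
import Mathlib

section
/- If (X,d,μ) is a space of homogeneous type with doubling constant A, then the sections E(x,r) satisfy the doubling property 0 < μ^k(E(x,2r)) ≤ Ã μ^k(E(x,r)) < ∞ for all x ∈ X, r > 0, with Ã = (8κ)^{k log₂ A}. -/
open MeasureTheory

/-- The hypermetric of order `k+1` on `X` induced by the quasi-metric `d`. -/
noncomputable def rho {X : Type*} [Nonempty X] (d : X → X → ℝ) {k : ℕ}
    (x : X) (y : Fin k → X) : ℝ :=
  ⨅ u : X, ⨆ i, d ((Fin.cons x y : Fin (k + 1) → X) i) u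

/-- The section at `x` of the `ρ`-tube of width `r` about the diagonal of `X^{k+1}`. -/
def sectionE {X : Type*} [Nonempty X] (d : X → X → ℝ) (k : ℕ) (x : X) (r : ℝ) :
    Set (Fin k → X) :=
  {y : Fin k → X | rho d x y < r}

lemma box_sub {X : Type*} [Nonempty X] (d : X → X → ℝ) (hnn : ∀ x y, 0 ≤ d x y)
    (hsym : ∀ x y, d x y = d y x) (hzero : ∀ x y, d x y = 0 ↔ x = y)
    {k : ℕ} (x : X) (s : ℝ) (hs : 0 < s) (y : Fin k → X)
    (h : ∀ i, d x (y i) < s) : rho d x y < s := by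
  have hb : BddBelow (Set.range fun u => ⨆ i, d ((Fin.cons x y : Fin (k+1) → X) i) u) := by
    refine ⟨0, ?_⟩
    rintro _ ⟨u, rfl⟩
    exact Real.iSup_nonneg fun i => hnn _ _
  refine lt_of_le_of_lt (ciInf_le hb x) ?_
  obtain ⟨i0, hi0⟩ := Finite.exists_max fun i => d ((Fin.cons x y : Fin (k+1) → X) i) x
  refine lt_of_le_of_lt (ciSup_le hi0) ?_
  induction i0 using Fin.cases with
  | zero => simp [(hzero x x).2 rfl, hs]
  | succ j => simpa [hsym (y j) x] using h j

lemma sub_box {X : Type*} [Nonempty X] (d : X → X → ℝ) (κ : ℝ) (hκ : 1 ≤ κ)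
    (hsym : ∀ x y, d x y = d y x)
    (htri : ∀ x y z, d x z ≤ κ * (d x y + d y z))
    {k : ℕ} (x : X) (s : ℝ) (y : Fin k → X)
    (h : rho d x y < s) : ∀ i, d x (y i) < 2 * κ * s := by
  intro i
  obtain ⟨u, hu⟩ := exists_lt_of_ciInf_lt h
  have hba : BddAbove (Set.range fun i => d ((Fin.cons x y : Fin (k+1) → X) i) u) :=
    (Set.finite_range _).bddAbove
  have h0 : d x u < s := lt_of_le_of_lt (le_ciSup hba 0) hu
  have hi : d (y i) u < s := lt_of_le_of_lt (le_ciSup hba i.succ) hu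
  have := htri x u (y i)
  rw [hsym u (y i)] at this
  nlinarith
/-- If `(X, d, μ)` is a space of homogeneous type with doubling constant `A`, the
sections `E(x, r)` satisfy the doubling property
`0 < μ^k(E(x, 2r)) ≤ Ã μ^k(E(x, r)) < ∞` with `Ã = (8κ)^{k log₂ A}`. -/
theorem stmt5 {X : Type*} [Nonempty X] [MeasurableSpace X] (d : X → X → ℝ)
    (κ A : ℝ) (hκ : 1 ≤ κ) (hA : 1 < A)
    (hnn : ∀ x y, 0 ≤ d x y) (hsym : ∀ x y, d x y = d y x)
    (hzero : ∀ x y, d x y = 0 ↔ x = y)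
    (htri : ∀ x y z, d x z ≤ κ * (d x y + d y z))
    (μ : Measure X)
    (hpos : ∀ (x : X) (r : ℝ), 0 < r → 0 < μ {y | d x y < r})
    (hfin : ∀ (x : X) (r : ℝ), 0 < r → μ {y | d x y < r} < ⊤)
    (hdbl : ∀ (x : X) (r : ℝ), 0 < r →
      μ {y | d x y < 2 * r} ≤ ENNReal.ofReal A * μ {y | d x y < r})
    (k : ℕ) (x : X) (r : ℝ) (hr : 0 < r) :
    0 < (Measure.pi fun _ : Fin k => μ) (sectionE d k x (2 * r)) ∧
    (Measure.pi fun _ : Fin k => μ) (sectionE d k x (2 * r)) ≤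
      ENNReal.ofReal ((8 * κ) ^ ((k : ℝ) * Real.logb 2 A)) *
        (Measure.pi fun _ : Fin k => μ) (sectionE d k x r) ∧
    (Measure.pi fun _ : Fin k => μ) (sectionE d k x r) < ⊤ := by
  have hκ0 : (0:ℝ) < κ := lt_of_lt_of_le one_pos hκ
  haveI : SigmaFinite μ := by
    refine ⟨⟨⟨fun n => {y | d x y < n + 1}, fun n => trivial,
      fun n => hfin x (n + 1) (by positivity), ?_⟩⟩⟩
    ext y
    simp only [Set.mem_iUnion, Set.mem_setOf_eq, Set.mem_univ, iff_true]
    exact ⟨⌊d x y⌋₊, Nat.lt_floor_add_one _⟩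
  set P : Measure (Fin k → X) := Measure.pi fun _ : Fin k => μ with hP
  have hbox : ∀ s : ℝ, P (Set.pi Set.univ fun _ : Fin k => {y | d x y < s})
      = μ {y | d x y < s} ^ k := by
    intro s
    rw [Measure.pi_pi]
    simp [Finset.prod_const]
  -- inclusions
  have hsub1 : ∀ s : ℝ, 0 < s →
      (Set.pi Set.univ fun _ : Fin k => {y | d x y < s}) ⊆ sectionE d k x s := by
    intro s hs y hy
    exact box_sub d hnn hsym hzero x s hs y fun i => hy i (Set.mem_univ i)
  have hsub2 : ∀ s : ℝ, sectionE d k x s ⊆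
      (Set.pi Set.univ fun _ : Fin k => {y | d x y < 2 * κ * s}) := by
    intro s y hy i _
    exact sub_box d κ hκ hsym htri x s y hy i
  -- doubling iterated
  have hiter : ∀ (m : ℕ) (s : ℝ), 0 < s →
      μ {y | d x y < 2 ^ m * s} ≤ ENNReal.ofReal A ^ m * μ {y | d x y < s} := by
    intro m
    induction m with
    | zero => intro s hs; simp
    | succ n ih =>
      intro s hs
      have h1 : (2:ℝ) ^ (n+1) * s = 2 ^ n * (2 * s) := by ring
      rw [h1]
      calc μ {y | d x y < 2 ^ n * (2 * s)}
          ≤ ENNReal.ofReal A ^ n * μ {y | d x y < 2 * s} := ih (2*s) (by linarith)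
        _ ≤ ENNReal.ofReal A ^ n * (ENNReal.ofReal A * μ {y | d x y < s}) := by
            gcongr; exact hdbl x s hs
        _ = ENNReal.ofReal A ^ (n+1) * μ {y | d x y < s} := by ring
  set m : ℕ := ⌈Real.logb 2 (4 * κ)⌉₊ with hm
  have hlogb4 : (0:ℝ) ≤ Real.logb 2 (4 * κ) := by
    apply Real.logb_nonneg one_lt_two; linarith
  have h4κ : 4 * κ ≤ 2 ^ m := by
    have h1 : (4 * κ : ℝ) = 2 ^ Real.logb 2 (4 * κ) :=
      (Real.rpow_logb two_pos (by norm_num) (by linarith)).symm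
    rw [h1, ← Real.rpow_natCast 2 m]
    exact Real.rpow_le_rpow_of_exponent_le one_le_two (Nat.le_ceil _)
  have hm8 : (m : ℝ) ≤ Real.logb 2 (8 * κ) := by
    have h8 : (8 * κ : ℝ) = 2 * (4 * κ) := by ring
    have : Real.logb 2 (8 * κ) = 1 + Real.logb 2 (4 * κ) := by
      rw [h8, Real.logb_mul (by norm_num) (by positivity), Real.logb_self_eq_one]
      · norm_num
      all_goals norm_num
    rw [this]
    have := Nat.ceil_lt_add_one hlogb4
    rw [← hm] at this
    linarith
  -- key real inequality
  have hAm : A ^ (m * k) ≤ (8 * κ) ^ ((k : ℝ) * Real.logb 2 A) := by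
    have hA0 : (0:ℝ) < A := by linarith
    have hlogA : 0 < Real.log A := Real.log_pos hA
    have hlog2 : 0 < Real.log 2 := Real.log_pos one_lt_two
    have h8κ1 : (1:ℝ) < 8 * κ := by linarith
    rw [Real.rpow_def_of_pos (by linarith : (0:ℝ) < 8 * κ),
      ← Real.rpow_natCast A (m * k), Real.rpow_def_of_pos hA0, Real.exp_le_exp]
    have hlog8 : (m : ℝ) * Real.log 2 ≤ Real.log (8 * κ) := by
      have := hm8
      rw [Real.logb, le_div_iff₀ hlog2] at this
      linarith
    have hh : Real.logb 2 A = Real.log A / Real.log 2 := rfl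
    rw [hh, show Real.log (8 * κ) * ((k:ℝ) * (Real.log A / Real.log 2)) =
      Real.log (8 * κ) * ((k:ℝ) * Real.log A) / Real.log 2 from by ring,
      le_div_iff₀ hlog2]
    push_cast
    nlinarith [mul_le_mul_of_nonneg_left hlog8
      (by positivity : (0:ℝ) ≤ (k:ℝ) * Real.log A)]
  refine ⟨?_, ?_, ?_⟩
  · calc (0:ENNReal) < μ {y | d x y < 2 * r} ^ k :=
        ENNReal.pow_pos (hpos x (2*r) (by linarith)) k
      _ = P (Set.pi Set.univ fun _ : Fin k => {y | d x y < 2 * r}) := (hbox _).symm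
      _ ≤ P (sectionE d k x (2 * r)) := measure_mono (hsub1 _ (by linarith))
  · calc P (sectionE d k x (2 * r))
        ≤ P (Set.pi Set.univ fun _ : Fin k => {y | d x y < 2 * κ * (2 * r)}) :=
          measure_mono (hsub2 _)
      _ = μ {y | d x y < 2 * κ * (2 * r)} ^ k := hbox _
      _ ≤ μ {y | d x y < 2 ^ m * r} ^ k := by
          refine pow_le_pow_left₀ zero_le (measure_mono ?_) k
          intro y hy
          simp only [Set.mem_setOf_eq] at *
          nlinarith [mul_le_mul_of_nonneg_right h4κ hr.le]
      _ ≤ (ENNReal.ofReal A ^ m * μ {y | d x y < r}) ^ k :=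
          pow_le_pow_left₀ zero_le (hiter m r hr) k
      _ = ENNReal.ofReal A ^ (m * k) * μ {y | d x y < r} ^ k := by
          rw [mul_pow, ← pow_mul]
      _ ≤ ENNReal.ofReal ((8 * κ) ^ ((k : ℝ) * Real.logb 2 A)) *
            P (sectionE d k x r) := by
          gcongr
          · rw [← ENNReal.ofReal_pow (by linarith : (0:ℝ) ≤ A)]
            exact ENNReal.ofReal_le_ofReal hAm
          · rw [← hbox r]
            exact measure_mono (hsub1 r hr)
  · calc P (sectionE d k x r)
        ≤ P (Set.pi Set.univ fun _ : Fin k => {y | d x y < 2 * κ * r}) :=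
          measure_mono (hsub2 _)
      _ = μ {y | d x y < 2 * κ * r} ^ k := hbox _
      _ < ⊤ := ENNReal.pow_lt_top (hfin x (2*κ*r) (by positivity))
end

section
/- If (X,d,μ) is α-Ahlfors regular with γ r^α ≤ μ(B_d(x,r)) ≤ Γ r^α, then γ^k r^{kα} ≤ μ^k(E(x,r)) ≤ (2κ)^{αk} Γ^k r^{kα} for every x ∈ X and r > 0. -/
open MeasureTheory

/-- If `(X, d, μ)` is `α`-Ahlfors regular with `γ r^α ≤ μ(B_d(x,r)) ≤ Γ r^α`, then
`γ^k r^{kα} ≤ μ^k(E(x,r)) ≤ (2κ)^{αk} Γ^k r^{kα}` for every `x ∈ X` and `r > 0`. -/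
theorem stmt6 {X : Type*} [Nonempty X] [MeasurableSpace X] (d : X → X → ℝ)
    (κ α γ Γ : ℝ) (hκ : 1 ≤ κ) (hα : 0 < α) (hγ : 0 < γ) (hγΓ : γ ≤ Γ)
    (hnn : ∀ x y, 0 ≤ d x y) (hsym : ∀ x y, d x y = d y x)
    (hzero : ∀ x y, d x y = 0 ↔ x = y)
    (htri : ∀ x y z, d x z ≤ κ * (d x y + d y z))
    (μ : Measure X)
    (hAhl : ∀ (x : X) (r : ℝ), 0 < r →
      ENNReal.ofReal (γ * r ^ α) ≤ μ {y | d x y < r} ∧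
      μ {y | d x y < r} ≤ ENNReal.ofReal (Γ * r ^ α))
    (k : ℕ) (x : X) (r : ℝ) (hr : 0 < r) :
    ENNReal.ofReal (γ ^ k * r ^ ((k : ℝ) * α)) ≤
      (Measure.pi fun _ : Fin k => μ) (sectionE d k x r) ∧
    (Measure.pi fun _ : Fin k => μ) (sectionE d k x r) ≤
      ENNReal.ofReal ((2 * κ) ^ (α * k) * Γ ^ k * r ^ ((k : ℝ) * α)) := by
  have hκ0 : (0:ℝ) < κ := lt_of_lt_of_le one_pos hκ
  -- σ-finiteness of μ
  have hsf : SigmaFinite μ := by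
    refine ⟨⟨⟨fun n => {y | d x y < n + 1}, fun _ => trivial, ?_, ?_⟩⟩⟩
    · intro n
      exact lt_of_le_of_lt ((hAhl x (n+1) (by positivity)).2) ENNReal.ofReal_lt_top
    · ext y
      simp only [Set.mem_iUnion, Set.mem_setOf_eq, Set.mem_univ, iff_true]
      obtain ⟨n, hn⟩ := exists_nat_gt (d x y)
      exact ⟨n, lt_trans hn (by linarith)⟩
  -- lower containment: product of balls of radius r is in the section
  have hlow : Set.univ.pi (fun _ : Fin k => {y : X | d x y < r}) ⊆ sectionE d k x r := by
    intro y hy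
    have hy' : ∀ i, d x (y i) < r := fun i => hy i (Set.mem_univ i)
    have hbdd : ∀ u : X, (0:ℝ) ≤ ⨆ i, d ((Fin.cons x y : Fin (k+1) → X) i) u := by
      intro u
      have := le_ciSup (Set.Finite.bddAbove (Set.finite_range
        (fun i => d ((Fin.cons x y : Fin (k+1) → X) i) u))) (0 : Fin (k+1))
      exact le_trans (hnn _ _) this
    have h1 : rho d x y ≤ ⨆ i, d ((Fin.cons x y : Fin (k+1) → X) i) x :=
      ciInf_le ⟨0, fun v ⟨u, hu⟩ => hu ▸ hbdd u⟩ x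
    refine lt_of_le_of_lt h1 ?_
    have hall : ∀ i : Fin (k+1), d ((Fin.cons x y : Fin (k+1) → X) i) x < r := by
      intro i
      refine Fin.cases ?_ ?_ i
      · simpa [(hzero x x).mpr rfl] using hr
      · intro j
        simpa [hsym] using hy' j
    obtain ⟨i0, hi0⟩ := Finite.exists_max (fun i : Fin (k+1) =>
      d ((Fin.cons x y : Fin (k+1) → X) i) x)
    exact lt_of_le_of_lt (ciSup_le fun i => hi0 i) (hall i0)
  -- upper containment: the section is in product of balls of radius 2κr
  have hup : sectionE d k x r ⊆
      Set.univ.pi (fun _ : Fin k => {y : X | d x y < 2 * κ * r}) := by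
    intro y hy i _
    obtain ⟨v, hv⟩ := exists_lt_of_ciInf_lt
      (show (⨅ u : X, ⨆ j, d ((Fin.cons x y : Fin (k+1) → X) j) u) < r from hy)
    have hle : ∀ i : Fin (k+1), d ((Fin.cons x y : Fin (k+1) → X) i) v < r := by
      intro i
      exact lt_of_le_of_lt (le_ciSup (Set.Finite.bddAbove (Set.finite_range
        (fun j => d ((Fin.cons x y : Fin (k+1) → X) j) v))) i) hv
    have h0 : d x v < r := by simpa using hle 0
    have h1 : d (y i) v < r := by simpa using hle i.succ
    have := htri x v (y i)
    have h2 : d v (y i) < r := by rwa [hsym] at h1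
    have : d x (y i) ≤ κ * (d x v + d v (y i)) := htri x v (y i)
    calc d x (y i) ≤ κ * (d x v + d v (y i)) := this
      _ < κ * (r + r) := by
          apply mul_lt_mul_of_pos_left _ hκ0
          linarith
      _ = 2 * κ * r := by ring
  -- measure computations
  have hpi_low := Measure.pi_pi (fun _ : Fin k => μ) (fun _ => {y : X | d x y < r})
  have hpi_up := Measure.pi_pi (fun _ : Fin k => μ) (fun _ => {y : X | d x y < 2 * κ * r})
  have hrk : r ^ ((k : ℝ) * α) = (r ^ α) ^ k := by
    rw [mul_comm, Real.rpow_mul hr.le, Real.rpow_natCast]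
  constructor
  · calc ENNReal.ofReal (γ ^ k * r ^ ((k : ℝ) * α))
        = ENNReal.ofReal ((γ * r ^ α) ^ k) := by rw [hrk, mul_pow]
      _ = ENNReal.ofReal (γ * r ^ α) ^ k := by
          rw [ENNReal.ofReal_pow (by positivity)]
      _ = ∏ _i : Fin k, ENNReal.ofReal (γ * r ^ α) := by
          rw [Finset.prod_const, Finset.card_univ, Fintype.card_fin]
      _ ≤ ∏ _i : Fin k, μ {y | d x y < r} :=
          Finset.prod_le_prod' (fun i _ => (hAhl x r hr).1)
      _ = (Measure.pi fun _ : Fin k => μ)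
            (Set.univ.pi (fun _ : Fin k => {y : X | d x y < r})) := hpi_low.symm
      _ ≤ _ := measure_mono hlow
  · have hR : (0:ℝ) < 2 * κ * r := by positivity
    calc (Measure.pi fun _ : Fin k => μ) (sectionE d k x r)
        ≤ (Measure.pi fun _ : Fin k => μ)
            (Set.univ.pi (fun _ : Fin k => {y : X | d x y < 2 * κ * r})) :=
          measure_mono hup
      _ = ∏ _i : Fin k, μ {y | d x y < 2 * κ * r} := hpi_up
      _ ≤ ∏ _i : Fin k, ENNReal.ofReal (Γ * (2 * κ * r) ^ α) :=
          Finset.prod_le_prod' (fun i _ => (hAhl x _ hR).2)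
      _ = ENNReal.ofReal ((Γ * (2 * κ * r) ^ α) ^ k) := by
          rw [Finset.prod_const, Finset.card_univ, Fintype.card_fin,
            ENNReal.ofReal_pow (mul_nonneg (lt_of_lt_of_le hγ hγΓ).le
              (Real.rpow_nonneg hR.le α))]
      _ = ENNReal.ofReal ((2 * κ) ^ (α * k) * Γ ^ k * r ^ ((k : ℝ) * α)) := by
          congr 1
          rw [hrk, Real.mul_rpow (by positivity) hr.le, Real.rpow_mul (by positivity),
            Real.rpow_natCast]
          ring
end

section
/- Let (X,d,μ) be a complete α-Ahlfors regular space and φ nonincreasing with 0 < s(φ) = ∫₀^∞ φ(t)t^{kα−1}dt < ∞. If ψ₁,…,ψ_k are continuous compactly supported real functions on X, then for every x ∈ X, lim_{ε→0} (1/J(x,ε)) ∫_{X^k} φ(ρ(x,x₁,…,x_k)/ε) |∏_j ψ_j(x_j) − ∏_j ψ_j(x)| dμ^k = 0. -/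
open MeasureTheory Set Filter Topology

set_option maxHeartbeats 2000000

/-- On a complete `α`-Ahlfors regular space, for nonincreasing `φ` with
`0 < ∫₀^∞ φ(t) t^{kα-1} dt < ∞` and continuous compactly supported `ψ₁,…,ψ_k`,
the mollified means of `|∏ⱼ ψⱼ(xⱼ) − ∏ⱼ ψⱼ(x)|` tend to `0` as `ε → 0⁺`,
for every `x ∈ X`. -/
theorem stmt15 {X : Type*} [Nonempty X] [MeasurableSpace X] [TopologicalSpace X]
    (d : X → X → ℝ)
    (κ α γ Γ : ℝ) (hκ : 1 ≤ κ) (hα : 0 < α) (hγ : 0 < γ) (hγΓ : γ ≤ Γ)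
    (hnn : ∀ x y, 0 ≤ d x y) (hsym : ∀ x y, d x y = d y x)
    (hzero : ∀ x y, d x y = 0 ↔ x = y)
    (htri : ∀ x y z, d x z ≤ κ * (d x y + d y z))
    (hbasis : ∀ x : X, (𝓝 x).HasBasis (fun r : ℝ => 0 < r) (fun r => {y | d x y < r}))
    (hcomplete : ∀ u : ℕ → X,
      (∀ ε > 0, ∃ N, ∀ m ≥ N, ∀ n ≥ N, d (u m) (u n) < ε) →
      ∃ x : X, Tendsto u atTop (𝓝 x))
    (μ : Measure X)
    (hAhl : ∀ (x : X) (r : ℝ), 0 < r →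
      ENNReal.ofReal (γ * r ^ α) ≤ μ {y | d x y < r} ∧
      μ {y | d x y < r} ≤ ENNReal.ofReal (Γ * r ^ α))
    (k : ℕ) (hk : 0 < k)
    (φ : ℝ → ℝ) (hφnn : ∀ t, 0 ≤ t → 0 ≤ φ t)
    (hφmono : ∀ s t, 0 ≤ s → s ≤ t → φ t ≤ φ s)
    (hφint : IntegrableOn (fun t => φ t * t ^ ((k : ℝ) * α - 1)) (Ioi (0 : ℝ)))
    (hφpos : 0 < ∫ t in Ioi (0 : ℝ), φ t * t ^ ((k : ℝ) * α - 1))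
    (ψ : Fin k → X → ℝ) (hψc : ∀ j, Continuous (ψ j))
    (hψs : ∀ j, HasCompactSupport (ψ j))
    (x : X) :
    Tendsto (fun ε : ℝ =>
        (∫ y : Fin k → X, φ (rho d x y / ε) ∂(Measure.pi fun _ : Fin k => μ))⁻¹ *
          ∫ y : Fin k → X, φ (rho d x y / ε) * |(∏ j, ψ j (y j)) - ∏ j, ψ j x|
            ∂(Measure.pi fun _ : Fin k => μ))
      (𝓝[>] 0) (𝓝 0) := by
  classical
  have hκ0 : (0:ℝ) < κ := lt_of_lt_of_le one_pos hκ
  have hΓ : (0:ℝ) < Γ := lt_of_lt_of_le hγ hγΓ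
  -- basic facts about rho
  have hbddA : ∀ (y : Fin k → X) (u : X),
      BddAbove (Set.range fun i : Fin (k+1) => d ((Fin.cons x y : Fin (k+1) → X) i) u) :=
    fun y u => (Set.finite_range _).bddAbove
  have hbddB : ∀ y : Fin k → X,
      BddBelow (Set.range fun u : X => ⨆ i, d ((Fin.cons x y : Fin (k+1) → X) i) u) := by
    intro y
    refine ⟨0, ?_⟩
    rintro v ⟨u, rfl⟩
    exact Real.iSup_nonneg fun i => hnn _ _
  have hrho_nn : ∀ y : Fin k → X, 0 ≤ rho d x y :=
    fun y => Real.iInf_nonneg fun u => Real.iSup_nonneg fun i => hnn _ _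
  have hrho_le : ∀ (y : Fin k → X) (s : ℝ), 0 ≤ s → (∀ j, d x (y j) ≤ s) →
      rho d x y ≤ s := by
    intro y s hs h
    refine ciInf_le_of_le (hbddB y) x (ciSup_le fun i => ?_)
    refine Fin.cases ?_ (fun j => ?_) i
    · simpa [(hzero x x).mpr rfl] using hs
    · simpa [hsym (y j) x] using h j
  have hrho_ge : ∀ (y : Fin k → X) (j : Fin k), d x (y j) ≤ 2 * κ * rho d x y := by
    intro y j
    have h2κ : (0:ℝ) < 2 * κ := by linarith
    have key : d x (y j) / (2 * κ) ≤ rho d x y := by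
      refine le_ciInf fun u => ?_
      have h1 : d x u ≤ ⨆ i, d ((Fin.cons x y : Fin (k+1) → X) i) u := by
        simpa using le_ciSup (hbddA y u) (0 : Fin (k+1))
      have h2 : d (y j) u ≤ ⨆ i, d ((Fin.cons x y : Fin (k+1) → X) i) u := by
        simpa using le_ciSup (hbddA y u) j.succ
      rw [div_le_iff₀ h2κ]
      calc d x (y j) ≤ κ * (d x u + d u (y j)) := htri x u (y j)
        _ = κ * (d x u + d (y j) u) := by rw [hsym u (y j)]
        _ ≤ κ * ((⨆ i, d ((Fin.cons x y : Fin (k+1) → X) i) u)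
              + ⨆ i, d ((Fin.cons x y : Fin (k+1) → X) i) u) := by
            have := hκ0.le; gcongr
        _ = (⨆ i, d ((Fin.cons x y : Fin (k+1) → X) i) u) * (2 * κ) := by ring
    calc d x (y j) = d x (y j) / (2*κ) * (2*κ) := by field_simp
      _ ≤ rho d x y * (2*κ) := by gcongr
      _ = 2 * κ * rho d x y := by ring
  -- sigma-finiteness and product ball measure
  have hsf : SigmaFinite μ := by
    refine ⟨⟨⟨fun n => {y | d x y < n + 1}, fun n => mem_univ _, fun n => ?_, ?_⟩⟩⟩
    · exact lt_of_le_of_lt (hAhl x (n+1) (by positivity)).2 ENNReal.ofReal_lt_top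
    · ext y
      simp only [mem_iUnion, mem_univ, iff_true, mem_setOf_eq]
      obtain ⟨n, hn⟩ := exists_nat_gt (d x y)
      exact ⟨n, hn.trans_le (by linarith)⟩
  set ν : Measure (Fin k → X) := Measure.pi fun _ : Fin k => μ with hνdef
  have hν_pball : ∀ s : ℝ,
      ν {y : Fin k → X | ∀ j, d x (y j) < s} = μ {z | d x z < s} ^ k := by
    intro s
    have hset : {y : Fin k → X | ∀ j, d x (y j) < s}
        = Set.pi univ (fun _ => {z | d x z < s}) := by
      ext y; simp [Set.mem_pi]
    rw [hνdef, hset, Measure.pi_pi]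
    simp [Finset.prod_const]
  -- exponent and tail facts
  set q : ℝ := (k : ℝ) * α with hqdef
  have hq : 0 < q := by positivity
  have hpowq : ∀ z : ℝ, 0 < z → (z ^ α) ^ k = z ^ q := by
    intro z hz
    rw [← Real.rpow_natCast (z ^ α) k, ← Real.rpow_mul hz.le, hqdef, mul_comm]
  have hτ0 : Tendsto (fun u => ∫ t in Ioi u, φ t * t ^ (q - 1)) atTop (𝓝 0) := by
    have h1 : Tendsto (fun u => ∫ t in (0:ℝ)..u, φ t * t ^ (q - 1)) atTop
        (𝓝 (∫ t in Ioi (0:ℝ), φ t * t ^ (q - 1))) :=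
      intervalIntegral_tendsto_integral_Ioi 0 hφint tendsto_id
    have h2 : ∀ᶠ u in (atTop : Filter ℝ), (∫ t in Ioi u, φ t * t ^ (q - 1))
        = (∫ t in Ioi (0:ℝ), φ t * t ^ (q - 1)) - ∫ t in (0:ℝ)..u, φ t * t ^ (q - 1) := by
      filter_upwards [eventually_ge_atTop (0:ℝ)] with u hu
      rw [intervalIntegral.integral_of_le hu, eq_sub_iff_add_eq, add_comm,
        ← setIntegral_union (Ioc_disjoint_Ioi le_rfl) measurableSet_Ioi
          (hφint.mono_set Ioc_subset_Ioi_self) (hφint.mono_set (Ioi_subset_Ioi hu)),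
        Ioc_union_Ioi_eq_Ioi hu]
    have h3 : Tendsto (fun u => (∫ t in Ioi (0:ℝ), φ t * t ^ (q - 1))
        - ∫ t in (0:ℝ)..u, φ t * t ^ (q - 1)) atTop (𝓝 0) := by
      have := tendsto_const_nhds (x := ∫ t in Ioi (0:ℝ), φ t * t ^ (q - 1))
        (f := (atTop : Filter ℝ)) |>.sub h1
      simpa using this
    exact h3.congr' (h2.mono fun u hu => hu.symm)
  obtain ⟨r₀, hr₀pos, hφr₀⟩ : ∃ r₀ : ℝ, 0 < r₀ ∧ 0 < φ r₀ := by
    by_contra h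
    push_neg at h
    have hzero' : ∀ t ∈ Ioi (0:ℝ), φ t * t ^ (q - 1) = 0 := by
      intro t ht
      have := le_antisymm (h t ht) (hφnn t (le_of_lt ht))
      simp [this]
    have : (∫ t in Ioi (0:ℝ), φ t * t ^ (q - 1)) = 0 := by
      rw [setIntegral_congr_fun measurableSet_Ioi hzero']
      simp
    linarith
  have h2q : (0:ℝ) < 1 - 2 ^ (-q) := by
    have : (2:ℝ) ^ (-q) < 1 :=
      Real.rpow_lt_one_of_one_lt_of_neg one_lt_two (by linarith)
    linarith
  set Cq : ℝ := q / (1 - 2 ^ (-q)) with hCqdef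
  have hCq : 0 < Cq := by positivity
  have hcomp : ∀ b : ℝ, 0 < b →
      φ b * b ^ q ≤ Cq * ∫ t in Ioc (b/2) b, φ t * t ^ (q - 1) := by
    intro b hb
    have hb2 : (0:ℝ) < b / 2 := by linarith
    have hab : b / 2 ≤ b := by linarith
    have hint1 : IntegrableOn (fun t => φ b * t ^ (q-1)) (Ioc (b/2) b) :=
      ((intervalIntegral.intervalIntegrable_rpow' (by linarith : (-1:ℝ) < q - 1)).1).const_mul _
    have hint2 : IntegrableOn (fun t => φ t * t ^ (q-1)) (Ioc (b/2) b) :=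
      hφint.mono_set (fun t ht => lt_of_lt_of_le hb2 ht.1.le)
    have hmono : (∫ t in Ioc (b/2) b, φ b * t ^ (q-1))
        ≤ ∫ t in Ioc (b/2) b, φ t * t ^ (q-1) := by
      refine setIntegral_mono_on hint1 hint2 measurableSet_Ioc fun t ht => ?_
      exact mul_le_mul_of_nonneg_right (hφmono t b (by linarith [ht.1]) ht.2)
        (Real.rpow_nonneg (by linarith [ht.1]) _)
    have hcalc : (∫ t in Ioc (b/2) b, φ b * t ^ (q-1))
        = φ b * ((b ^ q - (b/2) ^ q) / q) := by
      rw [integral_const_mul]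
      congr 1
      rw [← intervalIntegral.integral_of_le hab,
        integral_rpow (Or.inl (by linarith : (-1:ℝ) < q - 1))]
      norm_num
    have hhalf : (b/2 : ℝ) ^ q = b ^ q * 2 ^ (-q) := by
      rw [div_eq_mul_inv, Real.mul_rpow hb.le (by norm_num),
        Real.rpow_neg (by norm_num), ← Real.inv_rpow (by norm_num)]
    have hφb : 0 ≤ φ b := hφnn b hb.le
    calc φ b * b ^ q = Cq * (φ b * ((b ^ q - (b/2) ^ q) / q)) := by
          rw [hhalf, hCqdef]; field_simp
      _ ≤ Cq * ∫ t in Ioc (b/2) b, φ t * t ^ (q-1) := by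
          rw [← hcalc]; exact mul_le_mul_of_nonneg_left hmono hCq.le
  -- bound on the oscillation function
  obtain ⟨M, hM, hgM⟩ : ∃ M : ℝ, 0 < M ∧ ∀ y : Fin k → X,
      |(∏ j, ψ j (y j)) - ∏ j, ψ j x| ≤ M := by
    choose C hC using fun j => (hψs j).exists_bound_of_continuous (hψc j)
    have hCnn : ∀ j, 0 ≤ C j := fun j => le_trans (norm_nonneg _) (hC j x)
    have hPnn : 0 ≤ ∏ j, C j := Finset.prod_nonneg fun j _ => hCnn j
    refine ⟨2 * ∏ j, C j + 1, by linarith, fun y => ?_⟩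
    have hb : ∀ z : Fin k → X, |∏ j, ψ j (z j)| ≤ ∏ j, C j := by
      intro z
      rw [Finset.abs_prod]
      exact Finset.prod_le_prod (fun j _ => abs_nonneg _) (fun j _ => hC j (z j))
    calc |(∏ j, ψ j (y j)) - ∏ j, ψ j x| ≤ |∏ j, ψ j (y j)| + |∏ j, ψ j x| :=
          abs_sub _ _
      _ ≤ (∏ j, C j) + ∏ j, C j := add_le_add (hb y) (hb (fun _ => x))
      _ ≤ 2 * ∏ j, C j + 1 := by linarith
  -- continuity of the product at the diagonal point
  have hcont : ∀ δ' : ℝ, 0 < δ' → ∃ r₁ : ℝ, 0 < r₁ ∧ ∀ y : Fin k → X,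
      (∀ j, d x (y j) < r₁) → |(∏ j, ψ j (y j)) - ∏ j, ψ j x| ≤ δ' := by
    intro δ' hδ'
    have hF : Continuous fun y : Fin k → X => ∏ j, ψ j (y j) :=
      continuous_finset_prod _ fun j _ => (hψc j).comp (continuous_apply j)
    have hmem : {t : ℝ | |t - ∏ j, ψ j x| ≤ δ'}
        ∈ 𝓝 (∏ j, ψ j (((fun _ => x) : Fin k → X) j)) := by
      have : Metric.closedBall (∏ j, ψ j x) δ' ∈ 𝓝 (∏ j, ψ j x) :=
        Metric.closedBall_mem_nhds _ hδ'
      simpa [Metric.closedBall, Real.dist_eq] using this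
    have hU : (fun y : Fin k → X => ∏ j, ψ j (y j)) ⁻¹'
        {t : ℝ | |t - ∏ j, ψ j x| ≤ δ'} ∈ 𝓝 (fun _ => x : Fin k → X) :=
      hF.continuousAt.preimage_mem_nhds hmem
    rw [nhds_pi, Filter.mem_pi] at hU
    obtain ⟨I, hIf, V, hV, hVsub⟩ := hU
    have hiV : (⋂ j, V j) ∈ 𝓝 x := (Filter.iInter_mem).mpr hV
    obtain ⟨r₁, hr₁, hball⟩ := (hbasis x).mem_iff.mp hiV
    refine ⟨r₁, hr₁, fun y hy => ?_⟩
    have : y ∈ I.pi V := fun j _ => mem_iInter.mp (hball (hy j)) j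
    exact hVsub this
  -- begin the limit proof
  rw [NormedAddCommGroup.tendsto_nhds_zero]
  intro δ hδ
  obtain ⟨r₁, hr₁, hosc⟩ := hcont (δ/2) (by linarith)
  set c : ℝ := r₁ / (2*κ) with hcdef
  have hc : 0 < c := by positivity
  set cJ : ℝ := φ r₀ * (γ * r₀ ^ α) ^ k with hcJdef
  have hcJ : 0 < cJ := by
    have : (0:ℝ) < γ * r₀ ^ α := by positivity
    positivity
  set K : ℝ := Γ ^ k * (4*κ) ^ q * Cq with hKdef
  have hK : 0 < K := by positivity
  set θ : ℝ := cJ * δ / (2 * (M * K + 1)) with hθdef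
  have hθ : 0 < θ := by positivity
  have htail : ∀ᶠ u in (atTop : Filter ℝ), (∫ t in Ioi u, φ t * t ^ (q-1)) < θ :=
    hτ0.eventually_lt_const hθ
  have hty : Tendsto (fun ε : ℝ => c/4 * ε⁻¹) (𝓝[>] 0) atTop :=
    tendsto_inv_nhdsGT_zero.const_mul_atTop (by positivity)
  filter_upwards [self_mem_nhdsWithin, hty.eventually htail] with ε hε hτε
  simp only [mem_Ioi] at hε
  have hεq : 0 < ε ^ q := Real.rpow_pos_of_pos hε _
  set f : (Fin k → X) → ℝ := fun y => φ (rho d x y / ε) with hfdef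
  set g : (Fin k → X) → ℝ := fun y => |(∏ j, ψ j (y j)) - ∏ j, ψ j x| with hgdef
  show ‖(∫ y, f y ∂ν)⁻¹ * ∫ y, f y * g y ∂ν‖ < δ
  have hrho_div_nn : ∀ y, 0 ≤ rho d x y / ε := fun y => div_nonneg (hrho_nn y) hε.le
  have hf0 : ∀ y, 0 ≤ f y := fun y => hφnn _ (hrho_div_nn y)
  have hg0 : ∀ y, 0 ≤ g y := fun y => abs_nonneg _
  have hJ0 : 0 ≤ ∫ y, f y ∂ν := integral_nonneg hf0
  have hI0 : 0 ≤ ∫ y, f y * g y ∂ν :=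
    integral_nonneg fun y => mul_nonneg (hf0 y) (hg0 y)
  rw [Real.norm_eq_abs, abs_of_nonneg (mul_nonneg (inv_nonneg.mpr hJ0) hI0)]
  by_cases hfi : Integrable f ν
  swap
  · rw [integral_undef hfi]; simpa using hδ
  by_cases hgi : Integrable (fun y => f y * g y) ν
  swap
  · rw [integral_undef hgi, mul_zero]; exact hδ
  -- the main case
  set Lf : ENNReal := ∫⁻ y, ENNReal.ofReal (f y) ∂ν with hLfdef
  have hfm : AEMeasurable (fun y => ENNReal.ofReal (f y)) ν :=
    ENNReal.measurable_ofReal.comp_aemeasurable hfi.aestronglyMeasurable.aemeasurable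
  have hJeq : ∫ y, f y ∂ν = Lf.toReal :=
    integral_eq_lintegral_of_nonneg_ae (ae_of_all _ hf0) hfi.aestronglyMeasurable
  have hLftop : Lf ≠ ⊤ := by
    have h1 : ∀ y, ENNReal.ofReal (f y) ≤ (‖f y‖₊ : ENNReal) :=
      fun y => Real.ofReal_le_enorm _
    exact ((lintegral_mono h1).trans_lt hfi.hasFiniteIntegral).ne
  -- lower bound for J
  have hflb : {y : Fin k → X | ∀ j, d x (y j) < ε * r₀} ⊆
      {y | ENNReal.ofReal (φ r₀) ≤ ENNReal.ofReal (f y)} := by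
    intro y hy
    have h1 : rho d x y ≤ ε * r₀ := hrho_le y _ (by positivity) fun j => (hy j).le
    have h2 : rho d x y / ε ≤ r₀ := by rw [div_le_iff₀ hε]; linarith
    exact ENNReal.ofReal_le_ofReal (hφmono _ _ (hrho_div_nn y) h2)
  have hLflb : ENNReal.ofReal (φ r₀) * ENNReal.ofReal (γ * (ε*r₀) ^ α) ^ k ≤ Lf := by
    calc ENNReal.ofReal (φ r₀) * ENNReal.ofReal (γ * (ε*r₀) ^ α) ^ k
        ≤ ENNReal.ofReal (φ r₀)
            * ν {y | ENNReal.ofReal (φ r₀) ≤ ENNReal.ofReal (f y)} := by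
          gcongr
          calc ENNReal.ofReal (γ * (ε*r₀) ^ α) ^ k ≤ μ {z | d x z < ε*r₀} ^ k := by
                gcongr
                exact (hAhl x _ (by positivity)).1
            _ = ν {y : Fin k → X | ∀ j, d x (y j) < ε * r₀} := (hν_pball _).symm
            _ ≤ _ := measure_mono hflb
      _ ≤ Lf := mul_meas_ge_le_lintegral₀ hfm _
  have hJlb : cJ * ε ^ q ≤ ∫ y, f y ∂ν := by
    rw [hJeq]
    have heq : (ENNReal.ofReal (φ r₀) * ENNReal.ofReal (γ * (ε*r₀) ^ α) ^ k).toReal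
        = cJ * ε ^ q := by
      rw [ENNReal.toReal_mul, ENNReal.toReal_pow, ENNReal.toReal_ofReal (hφnn _ hr₀pos.le),
        ENNReal.toReal_ofReal (by positivity), Real.mul_rpow hε.le hr₀pos.le]
      have h1 : ((ε:ℝ) ^ α) ^ k = ε ^ q := hpowq ε hε
      calc φ r₀ * (γ * (ε ^ α * r₀ ^ α)) ^ k
          = φ r₀ * (γ * r₀ ^ α) ^ k * ((ε ^ α) ^ k) := by ring
        _ = cJ * ε ^ q := by rw [h1, hcJdef]
    rw [← heq]
    exact ENNReal.toReal_mono hLftop hLflb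
  have hJpos : 0 < ∫ y, f y ∂ν := lt_of_lt_of_le (by positivity) hJlb
  -- the staircase tail bound
  set u₀ : ℝ := c / (2*ε) with hu₀def
  have hu₀ : 0 < u₀ := by positivity
  set b : ℕ → ℝ := fun n => u₀ * 2 ^ n with hbdef
  have hbpos : ∀ n, 0 < b n := fun n => by rw [hbdef]; positivity
  set hfn : (Fin k → X) → ℝ := fun y => φ (max (rho d x y) c / ε) with hhfdef
  have hhf0 : ∀ y, 0 ≤ hfn y := fun y =>
    hφnn _ (div_nonneg (le_trans (hrho_nn y) (le_max_left _ _)) hε.le)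
  have hptwise : ∀ y, f y * g y ≤ δ/2 * f y + M * hfn y := by
    intro y
    rcases lt_or_ge (rho d x y) c with hlt | hge
    · have hdj : ∀ j, d x (y j) < r₁ := by
        intro j
        calc d x (y j) ≤ 2*κ*rho d x y := hrho_ge y j
          _ < 2*κ*c := by
              have h2κ : (0:ℝ) < 2 * κ := by linarith
              exact (mul_lt_mul_iff_right₀ h2κ).mpr hlt
          _ = r₁ := by rw [hcdef]; field_simp
      have hgy : g y ≤ δ/2 := hosc y hdj
      calc f y * g y ≤ f y * (δ/2) := mul_le_mul_of_nonneg_left hgy (hf0 y)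
        _ = δ/2 * f y := mul_comm _ _
        _ ≤ δ/2 * f y + M * hfn y :=
            le_add_of_nonneg_right (mul_nonneg hM.le (hhf0 y))
    · have hmax : max (rho d x y) c = rho d x y := max_eq_left hge
      have hfy : hfn y = f y := by simp only [hhfdef, hfdef, hmax]
      calc f y * g y ≤ f y * M := mul_le_mul_of_nonneg_left (hgM y) (hf0 y)
        _ = M * hfn y := by rw [hfy]; ring
        _ ≤ δ/2 * f y + M * hfn y :=
            le_add_of_nonneg_left (mul_nonneg (by linarith) (hf0 y))
  set T : ℕ → Set (Fin k → X) :=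
    fun n => toMeasurable ν {y | ∀ j, d x (y j) < 4*κ*ε*(b n)} with hTdef
  have hTmeas : ∀ n, MeasurableSet (T n) := fun n => measurableSet_toMeasurable _ _
  set a : ℕ → ENNReal := fun n => ENNReal.ofReal (φ (b n)) with hadef
  have hstep : ∀ y, ENNReal.ofReal (hfn y)
      ≤ ∑' n, a n * (T n).indicator (fun _ => (1:ENNReal)) y := by
    intro y
    have hex : ∃ n : ℕ, ∀ j, d x (y j) < 4*κ*ε*(b n) := by
      have hj : ∀ j, ∃ n : ℕ, d x (y j) < 4*κ*ε*(b n) := by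
        intro j
        obtain ⟨n, hn⟩ := exists_nat_gt (d x (y j) / (4*κ*ε*u₀))
        refine ⟨n, ?_⟩
        have h2 : (n:ℝ) < 2 ^ n := by exact_mod_cast Nat.lt_two_pow_self
        have hd : d x (y j) < 4*κ*ε*u₀ * n := by
          rw [div_lt_iff₀ (by positivity)] at hn; linarith
        calc d x (y j) < 4*κ*ε*u₀ * n := hd
          _ ≤ 4*κ*ε*u₀ * 2^n := by
              have : (0:ℝ) ≤ 4*κ*ε*u₀ := by positivity
              nlinarith
          _ = 4*κ*ε*(b n) := by rw [hbdef]; ring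
      choose nj hnj using hj
      refine ⟨Finset.univ.sup nj, fun j => lt_of_lt_of_le (hnj j) ?_⟩
      have hmono2 : (2:ℝ)^(nj j) ≤ 2^(Finset.univ.sup nj) :=
        pow_le_pow_right₀ one_le_two (Finset.le_sup (Finset.mem_univ j))
      have hbn : b (nj j) ≤ b (Finset.univ.sup nj) := by
        rw [hbdef]
        exact mul_le_mul_of_nonneg_left hmono2 hu₀.le
      exact mul_le_mul_of_nonneg_left hbn (by positivity)
    set n₀ := Nat.find hex with hn₀def
    have hy0 : ∀ j, d x (y j) < 4*κ*ε*(b n₀) := Nat.find_spec hex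
    have hyT : y ∈ T n₀ := subset_toMeasurable _ _ hy0
    have hkey : ENNReal.ofReal (hfn y) ≤ a n₀ := by
      apply ENNReal.ofReal_le_ofReal
      apply hφmono _ _ (hbpos n₀).le
      rw [le_div_iff₀ hε]
      rcases Nat.eq_zero_or_pos n₀ with h0 | hpos
      · rw [h0]
        have hb0 : b 0 * ε = c / 2 := by
          show u₀ * 2^0 * ε = c / 2
          rw [pow_zero, mul_one, hu₀def]
          field_simp
        have := le_max_right (rho d x y) c
        linarith
      · obtain ⟨m, hm⟩ : ∃ m, n₀ = m + 1 := ⟨n₀ - 1, (Nat.succ_pred_eq_of_pos hpos).symm⟩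
        have hnot : ¬ ∀ j, d x (y j) < 4*κ*ε*(b m) := by
          rw [hn₀def] at hm
          exact Nat.find_min hex (by omega)
        push_neg at hnot
        obtain ⟨j, hj⟩ := hnot
        have hrho' : 2*ε*(b m) ≤ rho d x y := by
          have h1 := hrho_ge y j
          have h2κ : (0:ℝ) < 2 * κ := by linarith
          nlinarith
        have hbm : b n₀ * ε = 2*ε*(b m) := by
          rw [hm, hbdef]; ring
        rw [hbm]
        exact le_trans hrho' (le_max_left _ _)
    calc ENNReal.ofReal (hfn y) ≤ a n₀ := hkey
      _ = a n₀ * (T n₀).indicator (fun _ => (1:ENNReal)) y := by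
          rw [indicator_of_mem hyT, mul_one]
      _ ≤ ∑' n, a n * (T n).indicator (fun _ => (1:ENNReal)) y := ENNReal.le_tsum n₀
  have hsum1 : (∫⁻ y, ENNReal.ofReal (hfn y) ∂ν) ≤ ∑' n, a n * ν (T n) := by
    calc (∫⁻ y, ENNReal.ofReal (hfn y) ∂ν)
        ≤ ∫⁻ y, ∑' n, a n * (T n).indicator (fun _ => (1:ENNReal)) y ∂ν :=
          lintegral_mono hstep
      _ = ∑' n, ∫⁻ y, a n * (T n).indicator (fun _ => (1:ENNReal)) y ∂ν :=
          lintegral_tsum fun n =>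
            ((measurable_const.indicator (hTmeas n)).const_mul _).aemeasurable
      _ = ∑' n, a n * ν (T n) := by
          refine tsum_congr fun n => ?_
          rw [lintegral_const_mul' (a n) _ (by simp only [hadef]; exact ENNReal.ofReal_ne_top),
            lintegral_indicator (hTmeas n) _, setLIntegral_one]
  have hνT : ∀ n, ν (T n) ≤ ENNReal.ofReal (Γ * (4*κ*ε*(b n)) ^ α) ^ k := by
    intro n
    rw [hTdef, measure_toMeasurable, hν_pball]
    gcongr
    exact (hAhl x _ (by positivity)).2
  set In : ℕ → ℝ := fun n => ∫ t in Ioc (b n/2) (b n), φ t * t ^ (q-1) with hIndef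
  have hIn0 : ∀ n, 0 ≤ In n := by
    intro n
    refine setIntegral_nonneg measurableSet_Ioc fun t ht => ?_
    have hbn2 : 0 < b n / 2 := by linarith [hbpos n]
    exact mul_nonneg (hφnn t (by linarith [ht.1])) (Real.rpow_nonneg (by linarith [ht.1]) _)
  have hterm : ∀ n, a n * ν (T n)
      ≤ ENNReal.ofReal (K * ε ^ q) * ENNReal.ofReal (In n) := by
    intro n
    calc a n * ν (T n) ≤ ENNReal.ofReal (φ (b n)) * ENNReal.ofReal (Γ * (4*κ*ε*(b n)) ^ α) ^ k := by
          rw [hadef]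
          exact mul_le_mul_right (hνT n) _
      _ = ENNReal.ofReal (φ (b n) * (Γ * (4*κ*ε*(b n)) ^ α) ^ k) := by
          rw [← ENNReal.ofReal_pow (by positivity), ← ENNReal.ofReal_mul (hφnn _ (hbpos n).le)]
      _ ≤ ENNReal.ofReal (K * ε ^ q * In n) := by
          apply ENNReal.ofReal_le_ofReal
          have h1 : (4*κ*ε*(b n)) ^ α = (4*κ) ^ α * ε ^ α * (b n) ^ α := by
            rw [show (4*κ*ε*(b n)) = (4*κ)*(ε*(b n)) by ring,
              Real.mul_rpow (by positivity) (by positivity),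
              Real.mul_rpow hε.le (hbpos n).le]
            ring
          have halg : (Γ * (4*κ*ε*(b n)) ^ α) ^ k
              = Γ^k * ((4*κ)^q * (ε^q * (b n)^q)) := by
            rw [h1, show Γ * ((4*κ) ^ α * ε ^ α * (b n) ^ α)
                = Γ * (4*κ) ^ α * ε ^ α * (b n) ^ α by ring,
              mul_pow, mul_pow, mul_pow, hpowq _ (by positivity), hpowq _ hε,
              hpowq _ (hbpos n)]
            ring
          calc φ (b n) * (Γ * (4*κ*ε*(b n)) ^ α) ^ k
              = Γ^k * (4*κ)^q * ε^q * (φ (b n) * (b n)^q) := by rw [halg]; ring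
            _ ≤ Γ^k * (4*κ)^q * ε^q * (Cq * In n) := by
                have hcb := hcomp (b n) (hbpos n)
                have hnn' : (0:ℝ) ≤ Γ^k * (4*κ)^q * ε^q := by positivity
                exact mul_le_mul_of_nonneg_left hcb hnn'
            _ = K * ε^q * In n := by rw [hKdef]; ring
      _ = ENNReal.ofReal (K * ε ^ q) * ENNReal.ofReal (In n) :=
          ENNReal.ofReal_mul (by positivity)
  -- summing the pieces
  have hdisj : Pairwise (Function.onFun Disjoint fun n : ℕ => Ioc (b n/2) (b n)) := by
    have hkey : ∀ m n : ℕ, m < n →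
        Disjoint (Ioc (b m/2) (b m)) (Ioc (b n/2) (b n)) := by
      intro m n hmn
      rw [Set.disjoint_left]
      rintro t ⟨_, ht2⟩ ⟨ht3, _⟩
      have hle : b m ≤ b n / 2 := by
        have h1 : (2:ℝ) * 2^m ≤ 2^n := by
          calc (2:ℝ) * 2^m = 2^(m+1) := by ring
            _ ≤ 2^n := pow_le_pow_right₀ one_le_two hmn
        show u₀ * 2^m ≤ u₀ * 2^n / 2
        rw [le_div_iff₀ (by norm_num : (0:ℝ) < 2)]
        nlinarith [hu₀]
      linarith
    intro m n hmn
    rcases hmn.lt_or_gt with h | h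
    · exact hkey m n h
    · exact (hkey n m h).symm
  have hUsub : (⋃ n, Ioc (b n/2) (b n)) ⊆ Ioi (u₀/2) := by
    rintro t ht
    rw [mem_iUnion] at ht
    obtain ⟨n, hn1, _⟩ := ht
    have : u₀ ≤ b n := by
      show u₀ ≤ u₀ * 2^n
      have h2 : (1:ℝ) ≤ 2^n := one_le_pow₀ one_le_two
      nlinarith [hu₀]
    exact mem_Ioi.mpr (by linarith)
  have hIntU : IntegrableOn (fun t => φ t * t ^ (q-1)) (⋃ n, Ioc (b n/2) (b n)) :=
    hφint.mono_set (hUsub.trans (Ioi_subset_Ioi (by positivity)))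
  have hHasSum := hasSum_integral_iUnion (μ := volume)
    (fun n : ℕ => measurableSet_Ioc (a := b n/2) (b := b n)) hdisj hIntU
  have hsum2 : ∑' n, In n ≤ ∫ t in Ioi (u₀/2), φ t * t ^ (q-1) := by
    rw [hIndef, hHasSum.tsum_eq]
    refine setIntegral_mono_set (hφint.mono_set (Ioi_subset_Ioi (by positivity)))
      ?_ (HasSubset.Subset.eventuallyLE hUsub)
    refine (ae_restrict_iff' measurableSet_Ioi).mpr (ae_of_all _ fun t ht => ?_)
    have ht0 : 0 < t := lt_trans (by positivity) ht
    exact mul_nonneg (hφnn t ht0.le) (Real.rpow_nonneg ht0.le _)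
  set τε : ℝ := ∫ t in Ioi (u₀/2), φ t * t ^ (q-1) with hτεdef
  have hτε0 : 0 ≤ τε := by
    refine setIntegral_nonneg measurableSet_Ioi fun t ht => ?_
    have ht0 : 0 < t := lt_trans (by positivity) ht
    exact mul_nonneg (hφnn t ht0.le) (Real.rpow_nonneg ht0.le _)
  have hτεθ : τε < θ := by
    have heq2 : u₀/2 = c/4 * ε⁻¹ := by
      rw [hu₀def]
      field_simp
      try ring
      try (left; trivial)
      try (left; ring)
    rw [hτεdef, heq2]
    exact hτε
  have hLh : (∫⁻ y, ENNReal.ofReal (hfn y) ∂ν)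
      ≤ ENNReal.ofReal (K * ε^q) * ENNReal.ofReal τε := by
    calc (∫⁻ y, ENNReal.ofReal (hfn y) ∂ν) ≤ ∑' n, a n * ν (T n) := hsum1
      _ ≤ ∑' n, ENNReal.ofReal (K * ε^q) * ENNReal.ofReal (In n) :=
          ENNReal.tsum_le_tsum hterm
      _ = ENNReal.ofReal (K * ε^q) * ∑' n, ENNReal.ofReal (In n) :=
          ENNReal.tsum_mul_left
      _ = ENNReal.ofReal (K * ε^q) * ENNReal.ofReal (∑' n, In n) := by
          rw [ENNReal.ofReal_tsum_of_nonneg hIn0 hHasSum.summable]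
      _ ≤ ENNReal.ofReal (K * ε^q) * ENNReal.ofReal τε := by
          gcongr
          try exact hsum2
  -- assembling the upper bound for I
  have hIeq : ∫ y, f y * g y ∂ν = (∫⁻ y, ENNReal.ofReal (f y * g y) ∂ν).toReal :=
    integral_eq_lintegral_of_nonneg_ae
      (ae_of_all _ fun y => mul_nonneg (hf0 y) (hg0 y)) hgi.aestronglyMeasurable
  have hLfg : (∫⁻ y, ENNReal.ofReal (f y * g y) ∂ν)
      ≤ ENNReal.ofReal (δ/2) * Lf
        + ENNReal.ofReal M * (∫⁻ y, ENNReal.ofReal (hfn y) ∂ν) := by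
    calc (∫⁻ y, ENNReal.ofReal (f y * g y) ∂ν)
        ≤ ∫⁻ y, (ENNReal.ofReal (δ/2) * ENNReal.ofReal (f y)
            + ENNReal.ofReal M * ENNReal.ofReal (hfn y)) ∂ν := by
          apply lintegral_mono
          intro y
          calc ENNReal.ofReal (f y * g y)
              ≤ ENNReal.ofReal (δ/2 * f y + M * hfn y) :=
                ENNReal.ofReal_le_ofReal (hptwise y)
            _ = ENNReal.ofReal (δ/2) * ENNReal.ofReal (f y)
                + ENNReal.ofReal M * ENNReal.ofReal (hfn y) := by
                rw [ENNReal.ofReal_add (mul_nonneg (by linarith) (hf0 y))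
                  (mul_nonneg hM.le (hhf0 y)), ENNReal.ofReal_mul (by linarith),
                  ENNReal.ofReal_mul hM.le]
      _ = (∫⁻ y, ENNReal.ofReal (δ/2) * ENNReal.ofReal (f y) ∂ν)
          + ∫⁻ y, ENNReal.ofReal M * ENNReal.ofReal (hfn y) ∂ν :=
          lintegral_add_left' (hfm.const_mul _) _
      _ = ENNReal.ofReal (δ/2) * Lf
          + ENNReal.ofReal M * (∫⁻ y, ENNReal.ofReal (hfn y) ∂ν) := by
          rw [lintegral_const_mul' _ _ ENNReal.ofReal_ne_top,
            lintegral_const_mul' _ _ ENNReal.ofReal_ne_top, hLfdef]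
  have hfin2 : ENNReal.ofReal (δ/2) * Lf
      + ENNReal.ofReal M * (ENNReal.ofReal (K*ε^q) * ENNReal.ofReal τε) ≠ ⊤ := by
    apply ENNReal.add_ne_top.mpr
    constructor
    · exact ENNReal.mul_ne_top ENNReal.ofReal_ne_top hLftop
    · exact ENNReal.mul_ne_top ENNReal.ofReal_ne_top
        (ENNReal.mul_ne_top ENNReal.ofReal_ne_top ENNReal.ofReal_ne_top)
  have hIle : ∫ y, f y * g y ∂ν ≤ δ/2 * (∫ y, f y ∂ν) + M * (K * ε^q * τε) := by
    rw [hIeq, hJeq]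
    calc (∫⁻ y, ENNReal.ofReal (f y * g y) ∂ν).toReal
        ≤ (ENNReal.ofReal (δ/2) * Lf
            + ENNReal.ofReal M * (ENNReal.ofReal (K*ε^q) * ENNReal.ofReal τε)).toReal := by
          refine ENNReal.toReal_mono hfin2 (le_trans hLfg ?_)
          gcongr
      _ = δ/2 * Lf.toReal + M * (K * ε^q * τε) := by
          rw [ENNReal.toReal_add (ENNReal.mul_ne_top ENNReal.ofReal_ne_top hLftop)
              (ENNReal.mul_ne_top ENNReal.ofReal_ne_top
                (ENNReal.mul_ne_top ENNReal.ofReal_ne_top ENNReal.ofReal_ne_top)),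
            ENNReal.toReal_mul, ENNReal.toReal_mul, ENNReal.toReal_mul,
            ENNReal.toReal_ofReal (by linarith : (0:ℝ) ≤ δ/2),
            ENNReal.toReal_ofReal hM.le,
            ENNReal.toReal_ofReal (by positivity : (0:ℝ) ≤ K*ε^q),
            ENNReal.toReal_ofReal hτε0]
  -- final arithmetic
  have hJne : (∫ y, f y ∂ν) ≠ 0 := ne_of_gt hJpos
  have h1 : (∫ y, f y ∂ν)⁻¹ * (∫ y, f y * g y ∂ν)
      ≤ (∫ y, f y ∂ν)⁻¹ * (δ/2 * (∫ y, f y ∂ν) + M * (K * ε^q * τε)) :=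
    mul_le_mul_of_nonneg_left hIle (inv_nonneg.mpr hJ0)
  have h2 : (∫ y, f y ∂ν)⁻¹ * (δ/2 * (∫ y, f y ∂ν) + M * (K * ε^q * τε))
      = δ/2 + (M*K*τε) * (ε^q * (∫ y, f y ∂ν)⁻¹) := by
    field_simp
    try ring
    try (left; trivial)
    try (left; ring)
  have h3 : ε^q * (∫ y, f y ∂ν)⁻¹ ≤ cJ⁻¹ := by
    have hJinv : (∫ y, f y ∂ν)⁻¹ ≤ (cJ * ε^q)⁻¹ :=
      inv_anti₀ (by positivity) hJlb
    calc ε^q * (∫ y, f y ∂ν)⁻¹ ≤ ε^q * (cJ * ε^q)⁻¹ :=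
        mul_le_mul_of_nonneg_left hJinv hεq.le
      _ = cJ⁻¹ := by
          field_simp
          try ring
          try (left; trivial)
          try (left; ring)
  calc (∫ y, f y ∂ν)⁻¹ * (∫ y, f y * g y ∂ν)
      ≤ δ/2 + (M*K*τε) * (ε^q * (∫ y, f y ∂ν)⁻¹) := by rw [← h2]; exact h1
    _ ≤ δ/2 + (M*K*θ) * cJ⁻¹ := by
        have e1 : (M*K*τε) * (ε^q * (∫ y, f y ∂ν)⁻¹) ≤ (M*K*τε) * cJ⁻¹ :=
          mul_le_mul_of_nonneg_left h3 (by positivity)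
        have e2 : (M*K*τε) * cJ⁻¹ ≤ (M*K*θ) * cJ⁻¹ := by
          have hMKτ : M*K*τε ≤ M*K*θ :=
            mul_le_mul_of_nonneg_left hτεθ.le (by positivity)
          exact mul_le_mul_of_nonneg_right hMKτ (by positivity)
        linarith
    _ < δ := by
        have hkey : (M*K*θ) * cJ⁻¹ < δ/2 := by
          rw [hθdef,
            show M*K*(cJ * δ / (2*(M*K+1)))*cJ⁻¹ = (M*K)*δ/(2*(M*K+1)) by
              field_simp,
            div_lt_div_iff₀ (by positivity) (by norm_num : (0:ℝ) < 2)]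
          nlinarith [hM, hK, hδ]
        linarith
end
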